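/- Let n ≥ 1, let A be an n×n real sub-generator matrix and α ∈ ℝⁿ a probability vector. The function μ ↦ τ(μ) = αᵀ (μI − A)⁻¹ ((−A)𝟙) is differentiable at every μ > 0 with derivative equal to −αᵀ ((μI − A)⁻¹)² ((−A)𝟙); this derivative is nonpositive, and consequently τ is antitone (nonincreasing) on (0, ∞). -/

import Mathlib

open Matrix

section Aux

variable {n : ℕ}

/-- Key positivity lemma: if `(μ•1 - A) *ᵥ x` is entrywise nonnegative, so is `x`. -/
lemma subgen_mulVec_nonneg (hn : 1 ≤ n) (A : Matrix (Fin n) (Fin n) ℝ)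
    (hoff : ∀ i j, i ≠ j → 0 ≤ A i j)
    (hrow : ∀ i, ∑ j, A i j ≤ 0) {μ : ℝ} (hμ : 0 < μ)
    (x : Fin n → ℝ) (hx : ∀ i, 0 ≤ ((μ • (1 : Matrix (Fin n) (Fin n) ℝ) - A) *ᵥ x) i) :
    ∀ i, 0 ≤ x i := by
  haveI : NeZero n := ⟨by omega⟩
  by_contra h
  push_neg at h
  obtain ⟨i₀, -, hmin⟩ := Finset.exists_min_image Finset.univ x ⟨0, Finset.mem_univ 0⟩
  obtain ⟨k, hk⟩ := h
  have hneg : x i₀ < 0 := lt_of_le_of_lt (hmin k (Finset.mem_univ k)) hk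
  have hentry : ((μ • (1 : Matrix (Fin n) (Fin n) ℝ) - A) *ᵥ x) i₀
      = μ * x i₀ - ∑ j, A i₀ j * x j := by
    simp [mulVec, dotProduct, Matrix.sub_apply, Matrix.smul_apply, one_apply, sub_mul, mul_ite,
      Finset.sum_sub_distrib, Finset.sum_ite_eq', mul_assoc]
  have hsum : x i₀ * ∑ j, A i₀ j ≤ ∑ j, A i₀ j * x j := by
    rw [Finset.mul_sum]
    refine Finset.sum_le_sum fun j _ => ?_
    rcases eq_or_ne i₀ j with rfl | hij
    · ring_nf; exact le_refl _
    · rw [mul_comm]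
      exact mul_le_mul_of_nonneg_left (hmin j (Finset.mem_univ j)) (hoff i₀ j hij)
  have h1 : ((μ • (1 : Matrix (Fin n) (Fin n) ℝ) - A) *ᵥ x) i₀
      ≤ x i₀ * (μ - ∑ j, A i₀ j) := by
    rw [hentry]; nlinarith [hsum]
  have h2 : x i₀ * (μ - ∑ j, A i₀ j) < 0 :=
    mul_neg_of_neg_of_pos hneg (by linarith [hrow i₀])
  exact absurd (hx i₀) (by linarith)

lemma subgen_isUnit (hn : 1 ≤ n) (A : Matrix (Fin n) (Fin n) ℝ)
    (hoff : ∀ i j, i ≠ j → 0 ≤ A i j)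
    (hrow : ∀ i, ∑ j, A i j ≤ 0) {μ : ℝ} (hμ : 0 < μ) :
    IsUnit (μ • (1 : Matrix (Fin n) (Fin n) ℝ) - A).det := by
  rw [isUnit_iff_ne_zero]
  intro hdet
  obtain ⟨v, hv0, hv⟩ := (Matrix.exists_mulVec_eq_zero_iff).2 hdet
  have h1 : ∀ i, 0 ≤ v i :=
    subgen_mulVec_nonneg hn A hoff hrow hμ v (by simp [hv])
  have h2 : ∀ i, 0 ≤ (-v) i :=
    subgen_mulVec_nonneg hn A hoff hrow hμ (-v) (by simp [Matrix.mulVec_neg, hv])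
  exact hv0 (funext fun i => le_antisymm (by simpa using h2 i) (h1 i))

lemma subgen_inv_mulVec_nonneg (hn : 1 ≤ n) (A : Matrix (Fin n) (Fin n) ℝ)
    (hoff : ∀ i j, i ≠ j → 0 ≤ A i j)
    (hrow : ∀ i, ∑ j, A i j ≤ 0) {μ : ℝ} (hμ : 0 < μ)
    (v : Fin n → ℝ) (hv : ∀ i, 0 ≤ v i) :
    ∀ i, 0 ≤ ((μ • (1 : Matrix (Fin n) (Fin n) ℝ) - A)⁻¹ *ᵥ v) i := by
  refine subgen_mulVec_nonneg hn A hoff hrow hμ _ ?_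
  rw [Matrix.mulVec_mulVec, Matrix.mul_nonsing_inv _ (subgen_isUnit hn A hoff hrow hμ),
    Matrix.one_mulVec]
  exact hv

end Aux

/-- **Differentiability and monotonicity of `τ`.**
For a sub-generator matrix `A` and probability vector `α`, the map
`μ ↦ τ(μ) = αᵀ (μI − A)⁻¹ ((−A)𝟙)` is differentiable at every `μ > 0` with
derivative `−αᵀ ((μI − A)⁻¹)² ((−A)𝟙)`; this derivative is nonpositive, and
consequently `τ` is antitone on `(0, ∞)`. -/
theorem tau_hasDerivAt_and_antitoneOn
    (n : ℕ) (hn : 1 ≤ n) (A : Matrix (Fin n) (Fin n) ℝ)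
    (hoff : ∀ i j, i ≠ j → 0 ≤ A i j)
    (hrow : ∀ i, ∑ j, A i j ≤ 0)
    (α : Fin n → ℝ) (hα0 : ∀ i, 0 ≤ α i) (hα1 : ∑ i, α i = 1) :
    (∀ μ : ℝ, 0 < μ →
      HasDerivAt
        (fun t : ℝ => α ⬝ᵥ ((t • (1 : Matrix (Fin n) (Fin n) ℝ) - A)⁻¹ *ᵥ ((-A) *ᵥ (1 : Fin n → ℝ))))
        (-(α ⬝ᵥ ((((μ • (1 : Matrix (Fin n) (Fin n) ℝ) - A)⁻¹) ^ 2) *ᵥ ((-A) *ᵥ (1 : Fin n → ℝ))))) μ ∧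
      -(α ⬝ᵥ ((((μ • (1 : Matrix (Fin n) (Fin n) ℝ) - A)⁻¹) ^ 2) *ᵥ ((-A) *ᵥ (1 : Fin n → ℝ)))) ≤ 0) ∧
    AntitoneOn
      (fun μ : ℝ => α ⬝ᵥ ((μ • (1 : Matrix (Fin n) (Fin n) ℝ) - A)⁻¹ *ᵥ ((-A) *ᵥ (1 : Fin n → ℝ))))
      (Set.Ioi (0 : ℝ)) := by
  set w : Fin n → ℝ := (-A) *ᵥ (1 : Fin n → ℝ) with hw
  set B : ℝ → Matrix (Fin n) (Fin n) ℝ := fun t => t • (1 : Matrix (Fin n) (Fin n) ℝ) - A with hB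
  have hwpos : ∀ i, 0 ≤ w i := by
    intro i
    have : w i = -(∑ j, A i j) := by simp [hw, mulVec, dotProduct]
    rw [this]; linarith [hrow i]
  have hU : ∀ {μ : ℝ}, 0 < μ → IsUnit (B μ).det := fun hμ => subgen_isUnit hn A hoff hrow hμ
  have hInvNN : ∀ {μ : ℝ}, 0 < μ → ∀ (v : Fin n → ℝ), (∀ i, 0 ≤ v i) →
      ∀ i, 0 ≤ ((B μ)⁻¹ *ᵥ v) i := fun hμ v hv => subgen_inv_mulVec_nonneg hn A hoff hrow hμ v hv
  -- resolvent identity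
  have hres : ∀ {t μ : ℝ}, 0 < t → 0 < μ →
      (B t)⁻¹ - (B μ)⁻¹ = (μ - t) • ((B t)⁻¹ * (B μ)⁻¹) := by
    intro t μ ht hμ
    have h1 : B μ - B t = (μ - t) • (1 : Matrix (Fin n) (Fin n) ℝ) := by
      simp [hB, sub_smul]
    have h2 : (B t)⁻¹ * (B μ - B t) * (B μ)⁻¹ = (B t)⁻¹ - (B μ)⁻¹ := by
      rw [Matrix.mul_sub, Matrix.sub_mul, Matrix.mul_assoc,
        Matrix.mul_nonsing_inv _ (hU hμ), Matrix.nonsing_inv_mul _ (hU ht),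
        Matrix.mul_one, Matrix.one_mul]
    rw [← h2, h1]
    rw [Matrix.mul_smul, Matrix.smul_mul, Matrix.mul_one]
  -- slopes
  have hslope : ∀ {t μ : ℝ}, 0 < t → 0 < μ →
      α ⬝ᵥ ((B t)⁻¹ *ᵥ w) - α ⬝ᵥ ((B μ)⁻¹ *ᵥ w)
        = (μ - t) * (α ⬝ᵥ ((B t)⁻¹ *ᵥ ((B μ)⁻¹ *ᵥ w))) := by
    intro t μ ht hμ
    rw [← dotProduct_sub, ← Matrix.sub_mulVec, hres ht hμ, Matrix.smul_mulVec,
      dotProduct_smul, ← Matrix.mulVec_mulVec]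
    simp
  constructor
  · intro μ hμ
    have hdnn : ∀ i, 0 ≤ (((B μ)⁻¹ ^ 2) *ᵥ w) i := by
      intro i
      have : ((B μ)⁻¹ ^ 2) *ᵥ w = (B μ)⁻¹ *ᵥ ((B μ)⁻¹ *ᵥ w) := by
        rw [sq, ← Matrix.mulVec_mulVec]
      rw [this]
      exact hInvNN hμ _ (hInvNN hμ w hwpos) i
    have hder_nonpos : -(α ⬝ᵥ (((B μ)⁻¹ ^ 2) *ᵥ w)) ≤ 0 := by
      have : 0 ≤ α ⬝ᵥ (((B μ)⁻¹ ^ 2) *ᵥ w) :=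
        Finset.sum_nonneg fun i _ => mul_nonneg (hα0 i) (hdnn i)
      linarith
    refine ⟨?_, hder_nonpos⟩
    -- the local auxiliary function equal to the slope
    set c : Fin n → ℝ := (B μ)⁻¹ *ᵥ w with hc
    have hg : ContinuousAt (fun t : ℝ => -(α ⬝ᵥ ((B t)⁻¹ *ᵥ c))) μ := by
      have hBc : Continuous B := by
        apply Continuous.sub ?_ continuous_const
        exact continuous_id.smul continuous_const
      have hdet : ContinuousAt (fun t => (B t).det) μ := (hBc.matrix_det).continuousAt
      have hadj : ContinuousAt (fun t => (B t).adjugate) μ := (hBc.matrix_adjugate).continuousAt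
      have hdetne : (B μ).det ≠ 0 := (hU hμ).ne_zero
      have hinv : ContinuousAt (fun t => (B t)⁻¹) μ := by
        simp only [Matrix.inv_def, Ring.inverse_eq_inv']
        exact ((hdet.inv₀ hdetne).smul hadj)
      have hmv : ContinuousAt (fun t => α ⬝ᵥ ((B t)⁻¹ *ᵥ c)) μ := by
        have : Continuous (fun M : Matrix (Fin n) (Fin n) ℝ => α ⬝ᵥ (M *ᵥ c)) :=
          (continuous_const.dotProduct (continuous_id.matrix_mulVec continuous_const))
        exact this.continuousAt.comp hinv
      exact hmv.neg
    rw [hasDerivAt_iff_tendsto_slope]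
    have heq : ∀ᶠ t in nhdsWithin μ {μ}ᶜ,
        slope (fun t : ℝ => α ⬝ᵥ ((B t)⁻¹ *ᵥ w)) μ t = -(α ⬝ᵥ ((B t)⁻¹ *ᵥ c)) := by
      have hmem : ∀ᶠ t in nhdsWithin μ {μ}ᶜ, t ∈ Set.Ioi (0:ℝ) ∩ {μ}ᶜ := by
        apply Filter.inter_mem
        · exact nhdsWithin_le_nhds (Ioi_mem_nhds hμ)
        · exact self_mem_nhdsWithin
      filter_upwards [hmem] with t ⟨ht, htne⟩
      have htμ : t - μ ≠ 0 := sub_ne_zero.2 htne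
      rw [slope_def_field]
      rw [div_eq_iff htμ]
      rw [hslope ht hμ]
      ring
    refine Filter.Tendsto.congr' (Filter.EventuallyEq.symm heq) ?_
    have hval : -(α ⬝ᵥ ((B μ)⁻¹ *ᵥ c)) = -(α ⬝ᵥ (((B μ)⁻¹ ^ 2) *ᵥ w)) := by
      rw [hc, Matrix.mulVec_mulVec, ← sq]
    rw [← hval]
    exact hg.tendsto.mono_left nhdsWithin_le_nhds
  · intro μ hμ t ht hμt
    have hμ' : (0:ℝ) < μ := hμ
    have ht' : (0:ℝ) < t := ht
    have := hslope ht' hμ'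
    have hnn : 0 ≤ α ⬝ᵥ ((B t)⁻¹ *ᵥ ((B μ)⁻¹ *ᵥ w)) :=
      Finset.sum_nonneg fun i _ => mul_nonneg (hα0 i) (hInvNN ht' _ (hInvNN hμ' w hwpos) i)
    simp only
    nlinarith [this, hnn]
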